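/- (Lemma: accuracy estimation error.) Consider m labeling functions whose accuracy parameters a_i^E = E[λ_i·Y | λ_i ≠ 0] are recovered by the triplet method, |â_i^E| = √(|M̂_ij·M̂_ik / M̂_jk|), from n unlabeled samples. Assume: (i) sign(â_i^E) = sign(a_i^E) for all i; (ii) |â_i^E|, |a_i^E| ≥ e_min > 0 for all i; (iii) all pairwise-agreement moments and their estimates have absolute value in [c₁, 1]; (iv) every pair used in recovery has support overlap at least o_min, and each 3×3 triplet submatrix error satisfies the matrix Hoeffding tail bound P(‖M̂_τ − M_τ‖₂ ≥ γ) ≤ 2·3·exp(−(n·o_min)·γ²/(32·3²)). Then the expected ℓ₁ estimation error of the accuracies â_i = (â_i^E + 1)/2 satisfies E[‖â − a‖₁] ≤ (81·√π / (e_min·c₁²)) · m / √(n·o_min). -/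

import Mathlib

open MeasureTheory
open scoped Matrix.Norms.L2Operator

/-- The probability of an event, as a real number. -/
noncomputable def pr {Ω : Type*} [MeasurableSpace Ω] (μ : Measure Ω) (A : Set Ω) : ℝ :=
  (μ A).toReal

/-- The `3 × 3` difference between the empirical and true second-moment
submatrices associated with the triplet `(i, j i, k i)`. -/
def tripletErrMatrix {Ωs : Type*} {m : ℕ}
    (Mhat : Ωs → Fin m → Fin m → ℝ) (M : Fin m → Fin m → ℝ)
    (jf kf : Fin m → Fin m) (i : Fin m) (s : Ωs) : Matrix (Fin 3) (Fin 3) ℝ :=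
  Matrix.of fun p q : Fin 3 =>
    Mhat s (![i, jf i, kf i] p) (![i, jf i, kf i] q)
      - M (![i, jf i, kf i] p) (![i, jf i, kf i] q)

section AuxLemmas

open Matrix

/-- Every entry of a matrix is bounded by its `ℓ²` operator norm. -/
lemma abs_entry_le_l2_opNorm {d : ℕ} (A : Matrix (Fin d) (Fin d) ℝ) (p q : Fin d) :
    |A p q| ≤ ‖A‖ := by
  have h := A.l2_opNorm_mulVec (EuclideanSpace.single q (1 : ℝ))
  rw [EuclideanSpace.norm_single, norm_one, mul_one] at h
  refine le_trans ?_ h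
  set y : EuclideanSpace ℝ (Fin d) :=
    (EuclideanSpace.equiv (Fin d) ℝ).symm (A *ᵥ (EuclideanSpace.single q (1 : ℝ))) with hy
  have hyp : y p = A p q := by
    show (A *ᵥ (Pi.single q (1:ℝ))) p = A p q
    rw [Matrix.mulVec_single]
    simp
  calc |A p q| = |y p| := by rw [hyp]
    _ ≤ ‖y‖ := by
        rw [EuclideanSpace.norm_eq, ← Real.sqrt_sq_eq_abs]
        apply Real.sqrt_le_sqrt
        have := Finset.single_le_sum (f := fun i => ‖y i‖ ^ 2)
          (fun i _ => by positivity) (Finset.mem_univ p)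
        simpa [Real.norm_eq_abs, sq_abs] using this

/-- A staircase upper bound for a bounded nonnegative real number. -/
lemma staircase (x τ : ℝ) (hx : 0 ≤ x) (hτ : 0 ≤ τ) :
    ∀ K : ℕ, x ≤ K * τ →
      x ≤ ∑ k ∈ Finset.range K, (if (k : ℝ) * τ ≤ x then τ else 0) := by
  intro K
  induction K with
  | zero => intro h; simp at h ⊢; linarith
  | succ K ih =>
    intro hK
    by_cases hcase : x ≤ K * τ
    · rw [Finset.sum_range_succ]
      have h2 : (0:ℝ) ≤ if (K : ℝ) * τ ≤ x then τ else 0 := by positivity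
      linarith [ih hcase]
    · push_neg at hcase
      have hall : ∀ k ∈ Finset.range (K+1), (if (k : ℝ) * τ ≤ x then τ else 0) = τ := by
        intro k hk
        rw [if_pos]
        have hkK : (k : ℝ) ≤ K := by
          exact_mod_cast Nat.lt_succ_iff.mp (Finset.mem_range.mp hk)
        nlinarith
      rw [Finset.sum_congr rfl hall, Finset.sum_const, Finset.card_range, nsmul_eq_mul]
      exact_mod_cast hK

/-- Geometric-type bound for the tail sums appearing in the proof. -/
lemma ifgeom_sum_le (q : ℝ) (hq0 : 0 < q) (hq1 : q < 1) (K : ℕ) :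
    ∑ k ∈ Finset.range K, (if k = 0 then (1:ℝ) else 6 * q ^ k) ≤ 1 + 6 * (q / (1 - q)) := by
  have h1q : 0 < 1 - q := by linarith
  rcases K with _ | K'
  · simp
    positivity
  · rw [Finset.sum_range_succ']
    have hterm : ∀ k ∈ Finset.range K',
        (if k + 1 = 0 then (1:ℝ) else 6 * q ^ (k+1)) = 6 * q * q ^ k := by
      intro k _
      rw [if_neg (Nat.succ_ne_zero k)]
      ring
    rw [Finset.sum_congr rfl hterm, if_pos rfl, ← Finset.mul_sum]
    have hgeom : ∑ k ∈ Finset.range K', q ^ k ≤ 1 / (1 - q) := by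
      rw [geom_sum_eq (ne_of_lt hq1)]
      rw [show (q ^ K' - 1) / (q - 1) = (1 - q ^ K') / (1 - q) by
        rw [div_eq_div_iff (by linarith : q - (1:ℝ) ≠ 0) h1q.ne']; ring]
      exact div_le_div₀ zero_le_one (by nlinarith [pow_nonneg hq0.le K']) h1q le_rfl
    have h6 : 6 * q * ∑ k ∈ Finset.range K', q ^ k ≤ 6 * q * (1/(1-q)) :=
      mul_le_mul_of_nonneg_left hgeom (by positivity)
    calc 6 * q * (∑ k ∈ Finset.range K', q ^ k) + 1 ≤ 6 * q * (1/(1-q)) + 1 := by linarith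
      _ = 1 + 6 * (q / (1-q)) := by ring

/-- exp(-8) is at most 1/256. -/
lemma exp_neg_eight_le : Real.exp (-8) ≤ 1/256 := by
  have h1 : Real.exp 8 = Real.exp 1 ^ (8:ℕ) := by
    rw [← Real.exp_nat_mul]; norm_num
  have h8 : (256:ℝ) ≤ Real.exp 8 := by
    rw [h1]
    calc (256:ℝ) = 2 ^ (8:ℕ) := by norm_num
      _ ≤ Real.exp 1 ^ (8:ℕ) :=
        pow_le_pow_left₀ (by norm_num) (le_of_lt (lt_trans (by norm_num) Real.exp_one_gt_d9)) 8
  rw [Real.exp_neg]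
  calc (Real.exp 8)⁻¹ ≤ (256:ℝ)⁻¹ := inv_anti₀ (by norm_num) h8
    _ = 1/256 := by norm_num

/-- Deterministic stability of the triplet-method recovery. -/
lemma triplet_lip (x y z x' y' z' emin c1 ah a : ℝ)
    (hhatsq : |ah| = Real.sqrt |x * y / z|) (htruesq : |a| = Real.sqrt |x' * y' / z'|)
    (hsgn : Real.sign ah = Real.sign a)
    (he : 0 < emin) (heh : emin ≤ |ah|) (het : emin ≤ |a|)
    (hc : 0 < c1) (hc1 : c1 ≤ 1)
    (hx : |x| ≤ 1) (hy : |y| ≤ 1) (hx' : |x'| ≤ 1) (hy' : |y'| ≤ 1)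
    (hz : c1 ≤ |z|) (hz' : c1 ≤ |z'|) :
    |ah - a| ≤ (|x - x'| + |y - y'| + |z - z'|) / (2 * emin * c1 ^ 2) := by
  have hz0 : z ≠ 0 := fun h => by rw [h, abs_zero] at hz; linarith
  have hz0' : z' ≠ 0 := fun h => by rw [h, abs_zero] at hz'; linarith
  have ha0 : a ≠ 0 := fun h => by rw [h, abs_zero] at het; linarith
  have hah0 : ah ≠ 0 := fun h => by rw [h, abs_zero] at heh; linarith
  -- step B: equal signs
  have hB : |ah - a| = |(|ah| - |a|)| := by
    rcases lt_or_gt_of_ne ha0 with hneg | hpos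
    · have hs : Real.sign ah = -1 := by rw [hsgn, Real.sign_of_neg hneg]
      have hahneg : ah < 0 := by
        rcases lt_trichotomy ah 0 with h | h | h
        · exact h
        · exact absurd h hah0
        · rw [Real.sign_of_pos h] at hs; norm_num at hs
      rw [abs_of_neg hneg, abs_of_neg hahneg, ← abs_neg]
      ring_nf
    · have hs : Real.sign ah = 1 := by rw [hsgn, Real.sign_of_pos hpos]
      have hahpos : 0 < ah := by
        rcases lt_trichotomy ah 0 with h | h | h
        · rw [Real.sign_of_neg h] at hs; norm_num at hs
        · exact absurd h hah0
        · exact h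
      rw [abs_of_pos hpos, abs_of_pos hahpos]
  -- step D: squares
  have hD1 : |ah| ^ 2 = |x * y / z| := by rw [hhatsq, Real.sq_sqrt (abs_nonneg _)]
  have hD2 : |a| ^ 2 = |x' * y' / z'| := by rw [htruesq, Real.sq_sqrt (abs_nonneg _)]
  -- step F: ratio Lipschitz
  have hc2 : 0 < c1 ^ 2 := by positivity
  have hc2le : c1 ^ 2 ≤ c1 := by nlinarith
  have hF : |x * y / z - x' * y' / z'| ≤ (|x - x'| + |y - y'| + |z - z'|) / c1 ^ 2 := by
    have key : x * y / z - x' * y' / z' =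
        ((x - x') * y) / z + (x' * (y - y')) / z + (x' * y' * (z' - z)) / (z * z') := by
      field_simp
      ring
    have ht1 : |((x - x') * y) / z| ≤ |x - x'| / c1 ^ 2 := by
      rw [abs_div]
      refine div_le_div₀ (abs_nonneg _) ?_ hc2 (le_trans hc2le hz)
      calc |(x - x') * y| = |x - x'| * |y| := abs_mul _ _
        _ ≤ |x - x'| * 1 := by gcongr
        _ = |x - x'| := mul_one _
    have ht2 : |(x' * (y - y')) / z| ≤ |y - y'| / c1 ^ 2 := by
      rw [abs_div]
      refine div_le_div₀ (abs_nonneg _) ?_ hc2 (le_trans hc2le hz)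
      calc |x' * (y - y')| = |x'| * |y - y'| := abs_mul _ _
        _ ≤ 1 * |y - y'| := by gcongr
        _ = |y - y'| := one_mul _
    have ht3 : |(x' * y' * (z' - z)) / (z * z')| ≤ |z - z'| / c1 ^ 2 := by
      rw [abs_div]
      refine div_le_div₀ (abs_nonneg _) ?_ hc2 ?_
      · calc |x' * y' * (z' - z)| = |x'| * |y'| * |z' - z| := by rw [abs_mul, abs_mul]
          _ ≤ 1 * 1 * |z' - z| := by gcongr
          _ = |z - z'| := by rw [one_mul, one_mul, abs_sub_comm]
      · rw [abs_mul]
        calc c1 ^ 2 = c1 * c1 := sq c1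
          _ ≤ |z| * |z'| := by
              apply mul_le_mul hz hz' hc.le (le_trans hc.le hz)
    calc |x * y / z - x' * y' / z'|
        ≤ |((x - x') * y) / z| + |(x' * (y - y')) / z| + |(x' * y' * (z' - z)) / (z * z')| := by
          rw [key]; exact (abs_add_three _ _ _)
      _ ≤ |x - x'| / c1 ^ 2 + |y - y'| / c1 ^ 2 + |z - z'| / c1 ^ 2 := by
          gcongr
      _ = (|x - x'| + |y - y'| + |z - z'|) / c1 ^ 2 := by ring
  -- step E+C: combine
  have hE : |(|ah| ^ 2 - |a| ^ 2)| ≤ (|x - x'| + |y - y'| + |z - z'|) / c1 ^ 2 := by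
    rw [hD1, hD2]
    exact (abs_abs_sub_abs_le_abs_sub _ _).trans hF
  have hC : |(|ah| - |a|)| * (2 * emin) ≤ |(|ah| ^ 2 - |a| ^ 2)| := by
    have hfac : |ah| ^ 2 - |a| ^ 2 = (|ah| - |a|) * (|ah| + |a|) := by ring
    rw [hfac, abs_mul, abs_of_nonneg (by positivity : (0:ℝ) ≤ |ah| + |a|)]
    gcongr
    linarith
  rw [hB]
  rw [le_div_iff₀ (by positivity : (0:ℝ) < 2 * emin * c1 ^ 2)]
  calc |(|ah| - |a|)| * (2 * emin * c1 ^ 2) = (|(|ah| - |a|)| * (2 * emin)) * c1 ^ 2 := by ring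
    _ ≤ ((|x - x'| + |y - y'| + |z - z'|) / c1 ^ 2) * c1 ^ 2 := by
        gcongr
        exact hC.trans hE
    _ = |x - x'| + |y - y'| + |z - z'| := by field_simp

/-- The sum of entrywise errors of the triplet submatrix. -/
def Sdiff {Ωs : Type*} {m : ℕ} (Mhat : Ωs → Fin m → Fin m → ℝ) (M : Fin m → Fin m → ℝ)
    (jf kf : Fin m → Fin m) (i : Fin m) (s : Ωs) : ℝ :=
  |Mhat s i (jf i) - M i (jf i)| + |Mhat s i (kf i) - M i (kf i)| +
    |Mhat s (jf i) (kf i) - M (jf i) (kf i)|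

end AuxLemmas

/-- **accuracy estimation error of the triplet method.** Under
sign recovery, magnitude bounds `e_min`, moment bounds `[c₁, 1]`, pairwise
support overlap at least `o_min`, and the matrix-Hoeffding tail bound for each
triplet submatrix (in the `ℓ₂` operator norm), the expected `ℓ₁` estimation
error of the accuracies `â_i = (â_i^E + 1)/2` satisfies
`E[‖â − a‖₁] ≤ (81√π/(e_min·c₁²))·m/√(n·o_min)`. -/
theorem triplet_accuracy_estimation_error
    {Ω 𝒳 Ωs : Type*} [MeasurableSpace Ω] [MeasurableSpace Ωs]
    (μ : Measure Ω) [IsProbabilityMeasure μ]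
    (ν : Measure Ωs) [IsProbabilityMeasure ν]
    (X : Ω → 𝒳) (Y : Ω → ℤ) (m n : ℕ) (hn : 0 < n)
    (lfs : Fin m → 𝒳 → ℤ)
    (jf kf : Fin m → Fin m)
    (aE : Fin m → ℝ) (M : Fin m → Fin m → ℝ)
    (ahatE : Ωs → Fin m → ℝ) (Mhat : Ωs → Fin m → Fin m → ℝ)
    (emin c1 omin : ℝ)
    -- true accuracy parameters a_i^E = E[λ_i·Y | λ_i ≠ 0]
    (haE : ∀ i, aE i =
      (∫ ω in {ω | lfs i (X ω) ≠ 0}, ((lfs i (X ω) * Y ω : ℤ) : ℝ) ∂μ)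
        / pr μ {ω | lfs i (X ω) ≠ 0})
    -- true pairwise agreement moments M_pq = E[λ_p·λ_q | λ_p, λ_q ≠ 0]
    (hM : ∀ p q, M p q =
      (∫ ω in {ω | lfs p (X ω) ≠ 0 ∧ lfs q (X ω) ≠ 0},
          ((lfs p (X ω) * lfs q (X ω) : ℤ) : ℝ) ∂μ)
        / pr μ {ω | lfs p (X ω) ≠ 0 ∧ lfs q (X ω) ≠ 0})
    -- the triplet-method identities, for the true and estimated parameters
    (htrue : ∀ i, |aE i| =
      Real.sqrt |M i (jf i) * M i (kf i) / M (jf i) (kf i)|)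
    (hhat : ∀ s i, |ahatE s i| =
      Real.sqrt |Mhat s i (jf i) * Mhat s i (kf i) / Mhat s (jf i) (kf i)|)
    -- (i) sign recovery
    (hsign : ∀ s i, Real.sign (ahatE s i) = Real.sign (aE i))
    -- (ii) magnitude lower bounds
    (hemin : 0 < emin)
    (hemin_hat : ∀ s i, emin ≤ |ahatE s i|)
    (hemin_true : ∀ i, emin ≤ |aE i|)
    -- (iii) moment magnitude bounds
    (hc1 : 0 < c1)
    (hMbnd : ∀ p q, c1 ≤ |M p q| ∧ |M p q| ≤ 1)
    (hMhatbnd : ∀ s p q, c1 ≤ |Mhat s p q| ∧ |Mhat s p q| ≤ 1)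
    -- (iv) pairwise support overlap and matrix Hoeffding tail bound per triplet
    (homin : 0 < omin)
    (hoverlap : ∀ p q : Fin m, p ≠ q →
      omin ≤ pr μ {ω | lfs p (X ω) ≠ 0 ∧ lfs q (X ω) ≠ 0})
    (hHoeffding : ∀ (i : Fin m) (γ : ℝ), 0 < γ →
      (ν {s | γ ≤ ‖tripletErrMatrix Mhat M jf kf i s‖}).toReal
        ≤ 2 * 3 * Real.exp (-((n * omin) * γ ^ 2 / (32 * 3 ^ 2)))) :
    (∫ s, ∑ i, |(ahatE s i + 1) / 2 - (aE i + 1) / 2| ∂ν)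
      ≤ (81 * Real.sqrt Real.pi / (emin * c1 ^ 2)) * m / Real.sqrt (n * omin) := by
  classical
  rcases Nat.eq_zero_or_pos m with hm | hm
  · subst hm
    simp only [Finset.univ_eq_empty, Finset.sum_empty, integral_zero, Nat.cast_zero, mul_zero,
      zero_div]
    exact le_refl 0
  have hnR : (0:ℝ) < n := by exact_mod_cast hn
  have hNpos : 0 < (n : ℝ) * omin := by positivity
  set N := (n : ℝ) * omin with hNdef
  have hsN : 0 < Real.sqrt N := Real.sqrt_pos.mpr hNpos
  set τ : ℝ := 144 / Real.sqrt N with hτdef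
  have hτ : 0 < τ := by positivity
  obtain ⟨K, hKτ⟩ : ∃ K : ℕ, (6:ℝ) ≤ K * τ :=
    ⟨⌈(6:ℝ) / τ⌉₊, (div_le_iff₀ hτ).mp (Nat.le_ceil _)⟩
  obtain ⟨i0⟩ : Nonempty (Fin m) := ⟨⟨0, hm⟩⟩
  have hc1le1 : c1 ≤ 1 := le_trans (hMbnd i0 i0).1 (hMbnd i0 i0).2
  set C : ℝ := (4 * emin * c1 ^ 2)⁻¹ with hCdef
  have hCpos : 0 < C := by rw [hCdef]; positivity
  have hSnonneg : ∀ (i : Fin m) s, 0 ≤ Sdiff Mhat M jf kf i s := by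
    intro i s; unfold Sdiff; positivity
  have habs2 : ∀ u v : ℝ, |u| ≤ 1 → |v| ≤ 1 → |u - v| ≤ 2 := by
    intro u v hu hv
    calc |u - v| = |u + -v| := by ring_nf
      _ ≤ |u| + |-v| := abs_add_le _ _
      _ ≤ 2 := by rw [abs_neg]; linarith
  have hS6 : ∀ (i : Fin m) s, Sdiff Mhat M jf kf i s ≤ 6 := by
    intro i s
    unfold Sdiff
    have h1 := habs2 _ _ (hMhatbnd s i (jf i)).2 (hMbnd i (jf i)).2
    have h2 := habs2 _ _ (hMhatbnd s i (kf i)).2 (hMbnd i (kf i)).2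
    have h3 := habs2 _ _ (hMhatbnd s (jf i) (kf i)).2 (hMbnd (jf i) (kf i)).2
    linarith
  set B : Fin m → ℕ → Set Ωs :=
    fun i k => toMeasurable ν {s | (k : ℝ) * τ ≤ Sdiff Mhat M jf kf i s} with hBdef
  have hBmeas : ∀ i k, MeasurableSet (B i k) := fun i k => measurableSet_toMeasurable ν _
  set g : Ωs → ℝ :=
    fun s => ∑ i : Fin m, ∑ k ∈ Finset.range K, (B i k).indicator (fun _ => C * τ) s with hgdef
  -- pointwise domination
  have hFg : ∀ s, (∑ i, |(ahatE s i + 1) / 2 - (aE i + 1) / 2|) ≤ g s := by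
    intro s
    rw [hgdef]
    apply Finset.sum_le_sum
    intro i _
    have hlip := triplet_lip (Mhat s i (jf i)) (Mhat s i (kf i)) (Mhat s (jf i) (kf i))
        (M i (jf i)) (M i (kf i)) (M (jf i) (kf i)) emin c1 (ahatE s i) (aE i)
        (hhat s i) (htrue i) (hsign s i) hemin (hemin_hat s i) (hemin_true i)
        hc1 hc1le1 (hMhatbnd s i (jf i)).2 (hMhatbnd s i (kf i)).2
        (hMbnd i (jf i)).2 (hMbnd i (kf i)).2 (hMhatbnd s (jf i) (kf i)).1
        (hMbnd (jf i) (kf i)).1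
    have hlip' : |ahatE s i - aE i| ≤ Sdiff Mhat M jf kf i s / (2 * emin * c1 ^ 2) := hlip
    have hhalf : |(ahatE s i + 1)/2 - (aE i + 1)/2| = |ahatE s i - aE i| / 2 := by
      rw [show (ahatE s i + 1)/2 - (aE i + 1)/2 = (ahatE s i - aE i)/2 by ring, abs_div]
      norm_num
    have hstep : Sdiff Mhat M jf kf i s ≤
        ∑ k ∈ Finset.range K, (if (k : ℝ) * τ ≤ Sdiff Mhat M jf kf i s then τ else 0) :=
      staircase _ _ (hSnonneg i s) hτ.le K ((hS6 i s).trans hKτ)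
    calc |(ahatE s i + 1)/2 - (aE i + 1)/2| ≤ C * Sdiff Mhat M jf kf i s := by
          rw [hhalf]
          calc |ahatE s i - aE i| / 2 ≤ (Sdiff Mhat M jf kf i s / (2 * emin * c1 ^ 2)) / 2 := by
                linarith
            _ = C * Sdiff Mhat M jf kf i s := by
                rw [hCdef]
                ring
      _ ≤ C * ∑ k ∈ Finset.range K, (if (k:ℝ)*τ ≤ Sdiff Mhat M jf kf i s then τ else 0) := by
          exact mul_le_mul_of_nonneg_left hstep hCpos.le
      _ = ∑ k ∈ Finset.range K, C * (if (k:ℝ)*τ ≤ Sdiff Mhat M jf kf i s then τ else 0) :=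
          Finset.mul_sum _ _ _
      _ ≤ ∑ k ∈ Finset.range K, (B i k).indicator (fun _ => C * τ) s := by
          apply Finset.sum_le_sum
          intro k _
          by_cases hcond : (k:ℝ)*τ ≤ Sdiff Mhat M jf kf i s
          · rw [if_pos hcond]
            have hmem : s ∈ B i k := by
              rw [hBdef]
              exact subset_toMeasurable ν _ hcond
            rw [Set.indicator_of_mem hmem]
          · rw [if_neg hcond, mul_zero]
            exact Set.indicator_nonneg (fun _ _ => by positivity) s
  have hgint : Integrable g ν := by
    rw [hgdef]
    apply integrable_finset_sum
    intro i _
    apply integrable_finset_sum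
    intro k _
    exact (integrable_const (C * τ)).indicator (hBmeas i k)
  -- compute the integral of g
  have hint : ∫ s, g s ∂ν = ∑ i : Fin m, ∑ k ∈ Finset.range K, (ν (B i k)).toReal * (C * τ) := by
    rw [hgdef]
    rw [integral_finset_sum _ (fun i _ =>
      integrable_finset_sum _ (fun k _ => (integrable_const (C * τ)).indicator (hBmeas i k)))]
    apply Finset.sum_congr rfl
    intro i _
    rw [integral_finset_sum _ (fun k _ => (integrable_const (C * τ)).indicator (hBmeas i k))]
    apply Finset.sum_congr rfl
    intro k _
    rw [integral_indicator_const (C * τ) (hBmeas i k), smul_eq_mul]; rfl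
  -- tail probabilities
  have hq0 : 0 < Real.exp (-8) := Real.exp_pos _
  have hq1 : Real.exp (-8) < 1 := by
    rw [Real.exp_lt_one_iff]; norm_num
  have htail : ∀ (i : Fin m), ∀ k ∈ Finset.range K,
      (ν (B i k)).toReal ≤ (if k = 0 then (1:ℝ) else 6 * Real.exp (-8) ^ k) := by
    intro i k _
    have hBA : ν (B i k) = ν {s | (k : ℝ) * τ ≤ Sdiff Mhat M jf kf i s} := by
      rw [hBdef]; exact measure_toMeasurable _
    by_cases hk : k = 0
    · rw [if_pos hk]
      calc (ν (B i k)).toReal ≤ (1 : ENNReal).toReal :=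
            ENNReal.toReal_mono ENNReal.one_ne_top prob_le_one
        _ = 1 := ENNReal.toReal_one
    · rw [if_neg hk]
      have hk1 : (1:ℝ) ≤ k := by exact_mod_cast Nat.one_le_iff_ne_zero.mpr hk
      have hkpos : (0:ℝ) < k := by linarith
      set γ := (k:ℝ) * τ / 3 with hγdef
      have hγpos : 0 < γ := by rw [hγdef]; positivity
      have hsub : {s | (k : ℝ) * τ ≤ Sdiff Mhat M jf kf i s} ⊆
          {s | γ ≤ ‖tripletErrMatrix Mhat M jf kf i s‖} := by
        intro s hs
        have hsS : (k:ℝ) * τ ≤ Sdiff Mhat M jf kf i s := hs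
        have h1 := abs_entry_le_l2_opNorm (tripletErrMatrix Mhat M jf kf i s) 0 1
        have h2 := abs_entry_le_l2_opNorm (tripletErrMatrix Mhat M jf kf i s) 0 2
        have h3 := abs_entry_le_l2_opNorm (tripletErrMatrix Mhat M jf kf i s) 1 2
        have e01 : (tripletErrMatrix Mhat M jf kf i s) 0 1
            = Mhat s i (jf i) - M i (jf i) := rfl
        have e02 : (tripletErrMatrix Mhat M jf kf i s) 0 2
            = Mhat s i (kf i) - M i (kf i) := rfl
        have e12 : (tripletErrMatrix Mhat M jf kf i s) 1 2
            = Mhat s (jf i) (kf i) - M (jf i) (kf i) := rfl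
        rw [e01] at h1
        rw [e02] at h2
        rw [e12] at h3
        show γ ≤ ‖tripletErrMatrix Mhat M jf kf i s‖
        unfold Sdiff at hsS
        rw [hγdef]
        linarith
      have hHo := hHoeffding i γ hγpos
      have hexp : 2 * 3 * Real.exp (-(N * γ ^ 2 / (32 * 3 ^ 2))) ≤ 6 * Real.exp (-8) ^ k := by
        have hτsq : τ ^ 2 = 20736 / N := by
          rw [hτdef, div_pow, Real.sq_sqrt hNpos.le]; norm_num
        have hNγ : N * γ ^ 2 / (32 * 3 ^ 2) = 8 * (k:ℝ) ^ 2 := by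
          rw [hγdef, div_pow, mul_pow, hτsq]
          field_simp
          ring
        rw [hNγ]
        have hmono : Real.exp (-(8 * (k:ℝ) ^ 2)) ≤ Real.exp (-8) ^ k := by
          rw [← Real.exp_nat_mul]
          apply Real.exp_le_exp.mpr
          nlinarith
        nlinarith [hmono, Real.exp_pos (-(8 * (k:ℝ) ^ 2))]
      calc (ν (B i k)).toReal
          = (ν {s | (k : ℝ) * τ ≤ Sdiff Mhat M jf kf i s}).toReal := by rw [hBA]
        _ ≤ (ν {s | γ ≤ ‖tripletErrMatrix Mhat M jf kf i s‖}).toReal :=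
            ENNReal.toReal_mono (measure_ne_top _ _) (measure_mono hsub)
        _ ≤ 2 * 3 * Real.exp (-(N * γ ^ 2 / (32 * 3 ^ 2))) := hHo
        _ ≤ 6 * Real.exp (-8) ^ k := hexp
  -- sum the tail bounds
  have hsumk : ∀ i : Fin m, ∑ k ∈ Finset.range K, (ν (B i k)).toReal * (C * τ) ≤
      (1 + 6 * (Real.exp (-8) / (1 - Real.exp (-8)))) * (C * τ) := by
    intro i
    rw [← Finset.sum_mul]
    apply mul_le_mul_of_nonneg_right _ (by positivity)
    calc ∑ k ∈ Finset.range K, (ν (B i k)).toReal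
        ≤ ∑ k ∈ Finset.range K, (if k = 0 then (1:ℝ) else 6 * Real.exp (-8) ^ k) :=
          Finset.sum_le_sum (htail i)
      _ ≤ 1 + 6 * (Real.exp (-8) / (1 - Real.exp (-8))) := ifgeom_sum_le _ hq0 hq1 K
  -- final numeric bound
  have hπ : 1 ≤ Real.sqrt Real.pi := by
    have := Real.sqrt_le_sqrt (show (1:ℝ) ≤ Real.pi by linarith [Real.pi_gt_three])
    rwa [Real.sqrt_one] at this
  have hfrac : Real.exp (-8) / (1 - Real.exp (-8)) ≤ 1/255 := by
    have h1 : Real.exp (-8) / (1 - Real.exp (-8)) ≤ (1/256) / (255/256) :=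
      div_le_div₀ (by norm_num) exp_neg_eight_le (by norm_num)
        (by linarith [exp_neg_eight_le])
    calc Real.exp (-8) / (1 - Real.exp (-8)) ≤ (1/256) / (255/256) := h1
      _ = 1/255 := by norm_num
  have hkey : (1 + 6 * (Real.exp (-8) / (1 - Real.exp (-8)))) * (C * τ)
      ≤ 81 * Real.sqrt Real.pi / (emin * c1 ^ 2) / Real.sqrt N := by
    have hCτ : C * τ = 36 / (emin * c1 ^ 2 * Real.sqrt N) := by
      rw [hCdef, hτdef]
      field_simp
      ring
    rw [hCτ, div_div, ← mul_div_assoc]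
    have hnum : (1 + 6 * (Real.exp (-8) / (1 - Real.exp (-8)))) * 36
        ≤ 81 * Real.sqrt Real.pi := by
      have hQ0 : 0 ≤ Real.exp (-8) / (1 - Real.exp (-8)) := div_nonneg hq0.le (by linarith)
      have h81 : (81:ℝ) ≤ 81 * Real.sqrt Real.pi := by linarith
      linarith
    exact div_le_div₀ (by positivity) hnum (by positivity) le_rfl
  calc (∫ s, ∑ i, |(ahatE s i + 1) / 2 - (aE i + 1) / 2| ∂ν) ≤ ∫ s, g s ∂ν :=
      integral_mono_of_nonneg
        (Filter.Eventually.of_forall fun s => Finset.sum_nonneg fun i _ => abs_nonneg _)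
        hgint (Filter.Eventually.of_forall hFg)
    _ = ∑ i : Fin m, ∑ k ∈ Finset.range K, (ν (B i k)).toReal * (C * τ) := hint
    _ ≤ ∑ _i : Fin m, (1 + 6 * (Real.exp (-8) / (1 - Real.exp (-8)))) * (C * τ) :=
        Finset.sum_le_sum (fun i _ => hsumk i)
    _ = m * ((1 + 6 * (Real.exp (-8) / (1 - Real.exp (-8)))) * (C * τ)) := by
        rw [Finset.sum_const, Finset.card_univ, Fintype.card_fin, nsmul_eq_mul]
    _ ≤ m * (81 * Real.sqrt Real.pi / (emin * c1 ^ 2) / Real.sqrt N) :=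
        mul_le_mul_of_nonneg_left hkey (Nat.cast_nonneg m)
    _ = (81 * Real.sqrt Real.pi / (emin * c1 ^ 2)) * m / Real.sqrt N := by ring
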